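/- Let θ : [0,∞) → [0,∞) be locally absolutely continuous and suppose for almost all t ≥ 0: if θ(t) > 0 then θ'(t) ≤ α(t)θ(t) + M₁ θ(t)^q, where q < 1, M₁ > 0, α is locally integrable, and ∫_{t₁}^{t₂} α(t) dt ≤ M₂ for all 0 ≤ t₁ ≤ t₂ and some M₂ > 0. Then θ(t) ≤ e^{M₂} (1 + M₁(1−q)t)^{1/(1−q)} (1 + θ(0)) for all t ≥ 0. -/

import Mathlib

open MeasureTheory intervalIntegral Set Filter

lemma cpg_master (P h w : ℝ → ℝ) (a b : ℝ) (hab : a ≤ b)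
    (hint : IntervalIntegrable h volume a b)
    (hwint : IntervalIntegrable w volume a b)
    (hw0 : 0 ≤ ∫ u in a..b, w u)
    (key : ∀ ε > 0, ∃ δ > 0, ∀ s t, a ≤ s → s ≤ t → t ≤ b → t - s ≤ δ →
      |P t - P s - ∫ u in s..t, h u| ≤ ε * ∫ u in s..t, w u) :
    P b - P a = ∫ u in a..b, h u := by
  set W := ∫ u in a..b, w u with hW
  have main : ∀ ε > 0, |P b - P a - ∫ u in a..b, h u| ≤ ε * W := by
    intro ε hε
    obtain ⟨δ, hδ, hkey⟩ := key ε hε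
    obtain ⟨n, hn⟩ := exists_nat_gt ((b - a) / δ)
    set N := n + 1 with hNdef
    have hN : (0:ℝ) < (N:ℝ) := by exact_mod_cast Nat.succ_pos n
    have hmesh0 : 0 ≤ (b - a) / (N:ℝ) := div_nonneg (by linarith) hN.le
    have hmesh : (b - a) / N ≤ δ := by
      rw [div_le_iff₀ hN, mul_comm]
      have h2 : (b - a) / δ < (N:ℝ) := by
        refine lt_of_lt_of_le hn ?_
        exact_mod_cast Nat.le_succ n
      calc b - a = (b - a) / δ * δ := by field_simp
        _ ≤ (N:ℝ) * δ := mul_le_mul_of_nonneg_right h2.le hδ.le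
    set x : ℕ → ℝ := fun i => a + i * ((b - a) / N) with hx
    have hx0 : x 0 = a := by simp [hx]
    have hxN : x N = b := by
      simp only [hx]
      field_simp
      ring
    have hstep : ∀ i : ℕ, x (i + 1) - x i = (b - a) / N := by
      intro i
      simp only [hx]
      push_cast
      ring
    have hmemx : ∀ i : ℕ, i ≤ N → a ≤ x i ∧ x i ≤ b := by
      intro i hi
      constructor
      · simp only [hx]; nlinarith [hmesh0, (Nat.cast_nonneg i : (0:ℝ) ≤ i)]
      · simp only [hx]
        have : (i:ℝ) * ((b - a) / N) ≤ (N:ℝ) * ((b - a) / N) := by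
          apply mul_le_mul_of_nonneg_right _ hmesh0
          exact_mod_cast hi
        have hN' : (N:ℝ) * ((b - a) / N) = b - a := by field_simp
        linarith
    clear_value x
    have hsubint : ∀ i : ℕ, i < N → Set.uIcc (x i) (x (i + 1)) ⊆ Set.uIcc a b := by
      intro i hi
      apply Set.uIcc_subset_uIcc <;> rw [Set.mem_uIcc]
      · exact Or.inl ⟨(hmemx i hi.le).1, (hmemx i hi.le).2⟩
      · exact Or.inl ⟨(hmemx (i+1) hi).1, (hmemx (i+1) hi).2⟩
    have hinth : ∀ i : ℕ, i < N → IntervalIntegrable h volume (x i) (x (i+1)) :=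
      fun i hi => hint.mono_set (hsubint i hi)
    have hintw : ∀ i : ℕ, i < N → IntervalIntegrable w volume (x i) (x (i+1)) :=
      fun i hi => hwint.mono_set (hsubint i hi)
    have hsum_h : ∑ i ∈ Finset.range N, (∫ u in (x i)..(x (i+1)), h u) = ∫ u in a..b, h u := by
      rw [intervalIntegral.sum_integral_adjacent_intervals hinth, hx0, hxN]
    have hsum_w : ∑ i ∈ Finset.range N, (∫ u in (x i)..(x (i+1)), w u) = W := by
      rw [intervalIntegral.sum_integral_adjacent_intervals hintw, hx0, hxN]
    have hPsum : P b - P a = ∑ i ∈ Finset.range N, (P (x (i+1)) - P (x i)) := by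
      rw [Finset.sum_range_sub (fun i => P (x i)) N, hx0, hxN]
    calc |P b - P a - ∫ u in a..b, h u|
        = |∑ i ∈ Finset.range N, (P (x (i+1)) - P (x i) - ∫ u in (x i)..(x (i+1)), h u)| := by
          rw [Finset.sum_sub_distrib, ← hPsum, hsum_h]
      _ ≤ ∑ i ∈ Finset.range N, |P (x (i+1)) - P (x i) - ∫ u in (x i)..(x (i+1)), h u| :=
          Finset.abs_sum_le_sum_abs _ _
      _ ≤ ∑ i ∈ Finset.range N, ε * ∫ u in (x i)..(x (i+1)), w u := by
          apply Finset.sum_le_sum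
          intro i hi
          rw [Finset.mem_range] at hi
          have h1 := (hmemx i hi.le).1
          have h2 := (hmemx (i+1) hi).2
          have h3 : x i ≤ x (i+1) := by
            have hh := hstep i
            have hh' := hmesh0
            linarith
          exact hkey (x i) (x (i+1)) h1 h3 h2 (by rw [hstep i]; exact hmesh)
      _ = ε * W := by rw [← Finset.mul_sum, hsum_w]
  have habs : |P b - P a - ∫ u in a..b, h u| ≤ 0 := by
    by_contra hpos
    push_neg at hpos
    have h1 := main (|P b - P a - ∫ u in a..b, h u| / (2 * (W + 1)))
      (div_pos hpos (by positivity))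
    set D := |P b - P a - ∫ u in a..b, h u|
    rw [div_mul_eq_mul_div, le_div_iff₀ (by positivity)] at h1
    nlinarith
  have := abs_nonneg (P b - P a - ∫ u in a..b, h u)
  have : P b - P a - ∫ u in a..b, h u = 0 := by
    rw [← abs_eq_zero]; linarith
  linarith

lemma cpg_uIcc_sub {a b c d : ℝ} (h1 : a ≤ c) (h2 : c ≤ d) (h3 : d ≤ b) :
    Set.uIcc c d ⊆ Set.uIcc a b := by
  rw [Set.uIcc_of_le h2, Set.uIcc_of_le (le_trans h1 (le_trans h2 h3))]
  exact Set.Icc_subset_Icc h1 h3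

lemma cpg_contOn (f g : ℝ → ℝ) (a b : ℝ) (hab : a ≤ b)
    (hg : IntervalIntegrable g volume a b)
    (hf : ∀ t ∈ Icc a b, f t = f a + ∫ u in a..t, g u) :
    ContinuousOn f (Icc a b) := by
  have h1 : ContinuousOn (fun t => f a + ∫ u in a..t, g u) (Icc a b) := by
    apply ContinuousOn.add continuousOn_const
    have := intervalIntegral.continuousOn_primitive_interval' hg (left_mem_uIcc (a := a) (b := b))
    rwa [Set.uIcc_of_le hab] at this
  exact h1.congr hf

lemma cpg_parts (f F g G : ℝ → ℝ) (a b : ℝ) (hab : a ≤ b)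
    (hg : IntervalIntegrable g volume a b) (hG : IntervalIntegrable G volume a b)
    (hf : ∀ t ∈ Icc a b, f t = f a + ∫ u in a..t, g u)
    (hF : ∀ t ∈ Icc a b, F t = F a + ∫ u in a..t, G u) :
    f b * F b - f a * F a = ∫ u in a..b, (f u * G u + F u * g u) := by
  have hfc := cpg_contOn f g a b hab hg hf
  have hFc := cpg_contOn F G a b hab hG hF
  have hIab : Set.uIcc a b = Icc a b := Set.uIcc_of_le hab
  have hfG : IntervalIntegrable (fun u => f u * G u) volume a b := by
    apply hG.continuousOn_mul; rwa [hIab]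
  have hFg : IntervalIntegrable (fun u => F u * g u) volume a b := by
    apply hg.continuousOn_mul; rwa [hIab]
  have hwint : IntervalIntegrable (fun u => |G u| + |g u|) volume a b := hG.abs.add hg.abs
  refine cpg_master (fun u => f u * F u) (fun u => f u * G u + F u * g u)
    (fun u => |G u| + |g u|) a b hab (hfG.add hFg) hwint
    (intervalIntegral.integral_nonneg hab (fun u _ => by positivity)) ?_
  intro ε hε
  obtain ⟨δ₁, hδ₁, hu1⟩ := Metric.uniformContinuousOn_iff.mp
    (isCompact_Icc.uniformContinuousOn_of_continuous hfc) ε hε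
  obtain ⟨δ₂, hδ₂, hu2⟩ := Metric.uniformContinuousOn_iff.mp
    (isCompact_Icc.uniformContinuousOn_of_continuous hFc) ε hε
  refine ⟨min δ₁ δ₂ / 2, by positivity, ?_⟩
  intro s t has hst htb hts
  show |f t * F t - f s * F s - ∫ u in s..t, (f u * G u + F u * g u)|
      ≤ ε * ∫ u in s..t, (|G u| + |g u|)
  have hsmem : s ∈ Icc a b := ⟨has, le_trans hst htb⟩
  have htmem : t ∈ Icc a b := ⟨le_trans has hst, htb⟩
  have hsubs : Set.uIcc s t ⊆ Set.uIcc a b := cpg_uIcc_sub has hst htb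
  have hgst := hg.mono_set hsubs
  have hGst := hG.mono_set hsubs
  have hfcst : ContinuousOn f (Set.uIcc s t) := hfc.mono (by rwa [hIab] at hsubs)
  have hFcst : ContinuousOn F (Set.uIcc s t) := hFc.mono (by rwa [hIab] at hsubs)
  have hft : f t = f s + ∫ u in s..t, g u := by
    have h1 := hf t htmem
    have h2 := hf s hsmem
    have h3 := intervalIntegral.integral_add_adjacent_intervals
      (hg.mono_set (cpg_uIcc_sub le_rfl has (le_trans hst htb))) hgst
    linarith
  have hFt : F t = F s + ∫ u in s..t, G u := by
    have h1 := hF t htmem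
    have h2 := hF s hsmem
    have h3 := intervalIntegral.integral_add_adjacent_intervals
      (hG.mono_set (cpg_uIcc_sub le_rfl has (le_trans hst htb))) hGst
    linarith
  have e1 : f t * F t - f s * F s
      = f t * (∫ u in s..t, G u) + F s * (∫ u in s..t, g u) := by
    rw [hft, hFt]; ring
  have i1 : ∫ u in s..t, (f t - f u) * G u
      = f t * (∫ u in s..t, G u) - ∫ u in s..t, f u * G u := by
    have e : (fun u => (f t - f u) * G u) = fun u => f t * G u - f u * G u := by
      funext u; ring
    rw [e, intervalIntegral.integral_sub (hGst.const_mul _) (hfG.mono_set hsubs),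
      intervalIntegral.integral_const_mul]
  have i2 : ∫ u in s..t, (F s - F u) * g u
      = F s * (∫ u in s..t, g u) - ∫ u in s..t, F u * g u := by
    have e : (fun u => (F s - F u) * g u) = fun u => F s * g u - F u * g u := by
      funext u; ring
    rw [e, intervalIntegral.integral_sub (hgst.const_mul _) (hFg.mono_set hsubs),
      intervalIntegral.integral_const_mul]
  have e3 : ∫ u in s..t, (f u * G u + F u * g u)
      = (∫ u in s..t, f u * G u) + ∫ u in s..t, F u * g u :=
    intervalIntegral.integral_add (hfG.mono_set hsubs) (hFg.mono_set hsubs)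
  have e4 : f t * F t - f s * F s - ∫ u in s..t, (f u * G u + F u * g u)
      = (∫ u in s..t, (f t - f u) * G u) + ∫ u in s..t, (F s - F u) * g u := by
    rw [i1, i2, e3, e1]; ring
  rw [e4]
  have hb1 : IntervalIntegrable (fun u => (f t - f u) * G u) volume s t :=
    hGst.continuousOn_mul (continuousOn_const.sub hfcst)
  have hb2 : IntervalIntegrable (fun u => (F s - F u) * g u) volume s t :=
    hgst.continuousOn_mul (continuousOn_const.sub hFcst)
  have habs1 : |∫ u in s..t, (f t - f u) * G u| ≤ ∫ u in s..t, ε * |G u| := by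
    refine le_trans ?_ (intervalIntegral.integral_mono_on hst hb1.abs (hGst.abs.const_mul ε) ?_)
    · exact intervalIntegral.abs_integral_le_integral_abs hst
    · intro u hu
      rw [abs_mul]
      apply mul_le_mul_of_nonneg_right _ (abs_nonneg _)
      have hd : dist t u < δ₁ := by
        rw [Real.dist_eq, abs_sub_lt_iff]
        constructor <;> [skip; skip] <;>
          · have := hu.1; have := hu.2
            have hmin : min δ₁ δ₂ ≤ δ₁ := min_le_left _ _
            linarith [lt_min hδ₁ hδ₂]
      have := hu1 t htmem u ⟨le_trans has hu.1, le_trans hu.2 htb⟩ hd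
      rw [Real.dist_eq] at this
      exact this.le
  have habs2 : |∫ u in s..t, (F s - F u) * g u| ≤ ∫ u in s..t, ε * |g u| := by
    refine le_trans ?_ (intervalIntegral.integral_mono_on hst hb2.abs (hgst.abs.const_mul ε) ?_)
    · exact intervalIntegral.abs_integral_le_integral_abs hst
    · intro u hu
      rw [abs_mul]
      apply mul_le_mul_of_nonneg_right _ (abs_nonneg _)
      have hd : dist s u < δ₂ := by
        rw [Real.dist_eq, abs_sub_lt_iff]
        constructor <;> [skip; skip] <;>
          · have := hu.1; have := hu.2
            have hmin : min δ₁ δ₂ ≤ δ₂ := min_le_right _ _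
            linarith [lt_min hδ₁ hδ₂]
      have := hu2 s hsmem u ⟨le_trans has hu.1, le_trans hu.2 htb⟩ hd
      rw [Real.dist_eq] at this
      exact this.le
  calc |(∫ u in s..t, (f t - f u) * G u) + ∫ u in s..t, (F s - F u) * g u|
      ≤ |∫ u in s..t, (f t - f u) * G u| + |∫ u in s..t, (F s - F u) * g u| := abs_add_le _ _
    _ ≤ (∫ u in s..t, ε * |G u|) + ∫ u in s..t, ε * |g u| := add_le_add habs1 habs2
    _ = ε * ∫ u in s..t, (|G u| + |g u|) := by
        rw [intervalIntegral.integral_const_mul, intervalIntegral.integral_const_mul,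
          intervalIntegral.integral_add hGst.abs hgst.abs]
        ring

lemma cpg_chain (f g Φ Φ' : ℝ → ℝ) (a b m M : ℝ) (hab : a ≤ b)
    (hg : IntervalIntegrable g volume a b)
    (hf : ∀ t ∈ Icc a b, f t = f a + ∫ u in a..t, g u)
    (hrange : ∀ t ∈ Icc a b, f t ∈ Icc m M)
    (hΦ : ∀ x ∈ Icc m M, HasDerivAt Φ (Φ' x) x)
    (hΦ'c : ContinuousOn Φ' (Icc m M)) :
    Φ (f b) - Φ (f a) = ∫ u in a..b, Φ' (f u) * g u := by
  have hfc := cpg_contOn f g a b hab hg hf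
  have hIab : Set.uIcc a b = Icc a b := Set.uIcc_of_le hab
  have hΨc : ContinuousOn (fun u => Φ' (f u)) (Icc a b) :=
    hΦ'c.comp hfc hrange
  have hhint : IntervalIntegrable (fun u => Φ' (f u) * g u) volume a b := by
    apply hg.continuousOn_mul; rwa [hIab]
  refine cpg_master (fun u => Φ (f u)) (fun u => Φ' (f u) * g u)
    (fun u => |g u|) a b hab hhint hg.abs
    (intervalIntegral.integral_nonneg hab (fun u _ => abs_nonneg _)) ?_
  intro ε hε
  obtain ⟨δ₁, hδ₁, hu1⟩ := Metric.uniformContinuousOn_iff.mp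
    (isCompact_Icc.uniformContinuousOn_of_continuous hΨc) ε hε
  refine ⟨δ₁ / 2, by positivity, ?_⟩
  intro s t has hst htb hts
  show |Φ (f t) - Φ (f s) - ∫ u in s..t, Φ' (f u) * g u| ≤ ε * ∫ u in s..t, |g u|
  have hsmem : s ∈ Icc a b := ⟨has, le_trans hst htb⟩
  have htmem : t ∈ Icc a b := ⟨le_trans has hst, htb⟩
  have hsubs : Set.uIcc s t ⊆ Set.uIcc a b := cpg_uIcc_sub has hst htb
  have hgst := hg.mono_set hsubs
  have hfcst : ContinuousOn f (Icc s t) := hfc.mono (Icc_subset_Icc has htb)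
  have hft : f t = f s + ∫ u in s..t, g u := by
    have h1 := hf t htmem
    have h2 := hf s hsmem
    have h3 := intervalIntegral.integral_add_adjacent_intervals
      (hg.mono_set (cpg_uIcc_sub le_rfl has (le_trans hst htb))) hgst
    linarith
  -- MVT + IVT: find ζ ∈ [s,t] with Φ (f t) - Φ (f s) = Φ' (f ζ) * (f t - f s)
  have hmean : ∃ ζ ∈ Icc s t, Φ (f t) - Φ (f s) = Φ' (f ζ) * (f t - f s) := by
    rcases lt_trichotomy (f s) (f t) with hlt | heq | hgt
    · have hIccsub : Icc (f s) (f t) ⊆ Icc m M :=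
        Icc_subset_Icc (hrange s hsmem).1 (hrange t htmem).2
      have hΦc : ContinuousOn Φ (Icc (f s) (f t)) := fun x hx =>
        ((hΦ x (hIccsub hx)).continuousAt).continuousWithinAt
      obtain ⟨c, hc, hceq⟩ := exists_hasDerivAt_eq_slope Φ Φ' hlt hΦc
        (fun x hx => hΦ x (hIccsub (Ioo_subset_Icc_self hx)))
      obtain ⟨ζ, hζ, hfζ⟩ := intermediate_value_Icc hst hfcst (Ioo_subset_Icc_self hc)
      refine ⟨ζ, hζ, ?_⟩
      rw [hfζ, hceq]
      exact (div_mul_cancel₀ _ (sub_ne_zero.mpr hlt.ne')).symm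
    · exact ⟨s, ⟨le_rfl, hst⟩, by rw [heq]; ring⟩
    · have hIccsub : Icc (f t) (f s) ⊆ Icc m M :=
        Icc_subset_Icc (hrange t htmem).1 (hrange s hsmem).2
      have hΦc : ContinuousOn Φ (Icc (f t) (f s)) := fun x hx =>
        ((hΦ x (hIccsub hx)).continuousAt).continuousWithinAt
      obtain ⟨c, hc, hceq⟩ := exists_hasDerivAt_eq_slope Φ Φ' hgt hΦc
        (fun x hx => hΦ x (hIccsub (Ioo_subset_Icc_self hx)))
      obtain ⟨ζ, hζ, hfζ⟩ := intermediate_value_Icc' hst hfcst (Ioo_subset_Icc_self hc)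
      refine ⟨ζ, hζ, ?_⟩
      rw [hfζ, hceq]
      have hne : f s - f t ≠ 0 := sub_ne_zero.mpr hgt.ne'
      field_simp
      ring
  obtain ⟨ζ, hζmem, hζ⟩ := hmean
  have e4 : Φ (f t) - Φ (f s) - ∫ u in s..t, Φ' (f u) * g u
      = ∫ u in s..t, (Φ' (f ζ) - Φ' (f u)) * g u := by
    have e : (fun u => (Φ' (f ζ) - Φ' (f u)) * g u)
        = fun u => Φ' (f ζ) * g u - Φ' (f u) * g u := by funext u; ring
    rw [e, intervalIntegral.integral_sub (hgst.const_mul _) (hhint.mono_set hsubs),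
      intervalIntegral.integral_const_mul, hζ, hft]
    ring
  rw [e4]
  have hΨcst : ContinuousOn (fun u => Φ' (f u)) (Icc s t) :=
    hΨc.mono (Icc_subset_Icc has htb)
  have hb1 : IntervalIntegrable (fun u => (Φ' (f ζ) - Φ' (f u)) * g u) volume s t := by
    apply hgst.continuousOn_mul
    rw [Set.uIcc_of_le hst]
    exact continuousOn_const.sub hΨcst
  refine le_trans (intervalIntegral.abs_integral_le_integral_abs hst) ?_
  have := intervalIntegral.integral_mono_on hst hb1.abs (hgst.abs.const_mul ε) ?_
  · rwa [intervalIntegral.integral_const_mul] at this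
  · intro u hu
    rw [abs_mul]
    apply mul_le_mul_of_nonneg_right _ (abs_nonneg _)
    have humem : u ∈ Icc a b := ⟨le_trans has hu.1, le_trans hu.2 htb⟩
    have hζab : ζ ∈ Icc a b := ⟨le_trans has hζmem.1, le_trans hζmem.2 htb⟩
    have hd : dist ζ u < δ₁ := by
      rw [Real.dist_eq, abs_sub_lt_iff]
      have h1 := hζmem.1; have h2 := hζmem.2
      have h3 := hu.1; have h4 := hu.2
      constructor <;> linarith
    have := hu1 ζ hζab u humem hd
    rw [Real.dist_eq] at this
    exact this.le

lemma cpg_core (θ θ' α : ℝ → ℝ) (M₁ M₂ q : ℝ)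
    (hM₁ : 0 < M₁) (hq : q < 1)
    (hθ'int : ∀ t, IntervalIntegrable θ' volume 0 t)
    (hθFTC : ∀ t, 0 ≤ t → θ t = θ 0 + ∫ s in (0:ℝ)..t, θ' s)
    (hαint : ∀ t, IntervalIntegrable α volume 0 t)
    (hαbound : ∀ t₁ t₂, 0 ≤ t₁ → t₁ ≤ t₂ → (∫ s in t₁..t₂, α s) ≤ M₂)
    (hineq : ∀ᵐ t ∂volume, 0 ≤ t → 0 < θ t → θ' t ≤ α t * θ t + M₁ * θ t ^ q)
    (a b : ℝ) (h0a : 0 ≤ a) (hab : a ≤ b)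
    (hθ1 : ∀ t ∈ Icc a b, 1 ≤ θ t) :
    θ b ^ (1 - q) ≤ Real.exp ((1 - q) * M₂) * (θ a ^ (1 - q) + (1 - q) * M₁ * (b - a)) := by
  set p := 1 - q with hpdef
  have hp : 0 < p := by simp [hpdef]; linarith
  have h0b : (0:ℝ) ≤ b := le_trans h0a hab
  have hIab : Set.uIcc a b = Icc a b := Set.uIcc_of_le hab
  have hθ'ab : IntervalIntegrable θ' volume a b :=
    (hθ'int b).mono_set (cpg_uIcc_sub h0a hab le_rfl)
  have hαab : IntervalIntegrable α volume a b :=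
    (hαint b).mono_set (cpg_uIcc_sub h0a hab le_rfl)
  have hθrep : ∀ t ∈ Icc a b, θ t = θ a + ∫ u in a..t, θ' u := by
    intro t ht
    have h1 := hθFTC t (le_trans h0a ht.1)
    have h2 := hθFTC a h0a
    have h3 := intervalIntegral.integral_add_adjacent_intervals (hθ'int a)
      ((hθ'int t).mono_set (cpg_uIcc_sub h0a ht.1 le_rfl))
    linarith
  have hθc : ContinuousOn θ (Icc a b) := cpg_contOn θ θ' a b hab hθ'ab hθrep
  obtain ⟨tmax, htmax, hmax⟩ := isCompact_Icc.exists_isMaxOn (Set.nonempty_Icc.mpr hab) hθc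
  set C := θ tmax with hCdef
  have hC : ∀ t ∈ Icc a b, θ t ≤ C := fun t ht => hmax ht
  have hC1 : 1 ≤ C := hθ1 tmax htmax
  have hrange : ∀ t ∈ Icc a b, θ t ∈ Icc 1 C := fun t ht => ⟨hθ1 t ht, hC t ht⟩
  -- chain rule for ψ = θ ^ p
  have hΦ : ∀ x ∈ Icc 1 C, HasDerivAt (fun x : ℝ => x ^ p) (p * x ^ (p - 1)) x := by
    intro x hx
    exact Real.hasDerivAt_rpow_const (Or.inl (by nlinarith [hx.1] : x ≠ 0))
  have hΦ'c : ContinuousOn (fun x : ℝ => p * x ^ (p - 1)) (Icc 1 C) :=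
    continuousOn_const.mul (ContinuousOn.rpow_const continuousOn_id
      (fun x hx => Or.inl (by nlinarith [hx.1] : x ≠ 0)))
  have hψrep : ∀ t ∈ Icc a b, θ t ^ p = θ a ^ p + ∫ u in a..t, p * θ u ^ (p - 1) * θ' u := by
    intro t ht
    have h := cpg_chain θ θ' (fun x : ℝ => x ^ p) (fun x : ℝ => p * x ^ (p - 1)) a t 1 C ht.1
      (hθ'ab.mono_set (cpg_uIcc_sub le_rfl ht.1 ht.2))
      (fun u hu => hθrep u ⟨hu.1, le_trans hu.2 ht.2⟩)
      (fun u hu => hrange u ⟨hu.1, le_trans hu.2 ht.2⟩) hΦ hΦ'c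
    linarith
  have hθpcont : ContinuousOn (fun u => θ u ^ p) (Icc a b) :=
    hθc.rpow_const (fun u hu => Or.inl (by nlinarith [hθ1 u hu] : θ u ≠ 0))
  have hGψab : IntervalIntegrable (fun u => p * θ u ^ (p - 1) * θ' u) volume a b := by
    apply hθ'ab.continuousOn_mul
    rw [hIab]
    exact continuousOn_const.mul
      (hθc.rpow_const (fun u hu => Or.inl (by nlinarith [hθ1 u hu] : θ u ≠ 0)))
  -- integrating factor E = exp (-p * A)
  set A : ℝ → ℝ := fun t => ∫ u in a..t, α u with hAdef
  have hAa : A a = 0 := intervalIntegral.integral_same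
  have hArep : ∀ t ∈ Icc a b, A t = A a + ∫ u in a..t, α u := by
    intro t ht; rw [hAa]; simp [hAdef]
  have hAc : ContinuousOn A (Icc a b) := cpg_contOn A α a b hab hαab hArep
  obtain ⟨tA1, htA1, hminA⟩ := isCompact_Icc.exists_isMinOn (Set.nonempty_Icc.mpr hab) hAc
  obtain ⟨tA2, htA2, hmaxA⟩ := isCompact_Icc.exists_isMaxOn (Set.nonempty_Icc.mpr hab) hAc
  have hArange : ∀ t ∈ Icc a b, A t ∈ Icc (A tA1) (A tA2) :=
    fun t ht => ⟨hminA ht, hmaxA ht⟩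
  have hΦe : ∀ x : ℝ, HasDerivAt (fun x : ℝ => Real.exp (-p * x))
      (-p * Real.exp (-p * x)) x := by
    intro x
    have h : HasDerivAt (fun y : ℝ => -p * y) (-p) x := by
      simpa using (hasDerivAt_id x).const_mul (-p)
    have h2 := h.exp
    convert h2 using 1
    ring
  have hΦe'c : ContinuousOn (fun x : ℝ => -p * Real.exp (-p * x)) (Icc (A tA1) (A tA2)) :=
    (continuous_const.mul (Real.continuous_exp.comp (continuous_const.mul
      continuous_id))).continuousOn
  have hErep : ∀ t ∈ Icc a b, Real.exp (-p * A t)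
      = Real.exp (-p * A a) + ∫ u in a..t, -p * Real.exp (-p * A u) * α u := by
    intro t ht
    have h := cpg_chain A α (fun x : ℝ => Real.exp (-p * x))
      (fun x : ℝ => -p * Real.exp (-p * x)) a t (A tA1) (A tA2) ht.1
      (hαab.mono_set (cpg_uIcc_sub le_rfl ht.1 ht.2))
      (fun u hu => hArep u ⟨hu.1, le_trans hu.2 ht.2⟩)
      (fun u hu => hArange u ⟨hu.1, le_trans hu.2 ht.2⟩)
      (fun x _ => hΦe x) hΦe'c
    linarith
  have hEc : ContinuousOn (fun u => Real.exp (-p * A u)) (Icc a b) :=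
    (Real.continuous_exp.comp_continuousOn (continuousOn_const.mul hAc))
  have hGEab : IntervalIntegrable (fun u => -p * Real.exp (-p * A u) * α u) volume a b := by
    apply hαab.continuousOn_mul
    rw [hIab]
    exact continuousOn_const.mul hEc
  -- integration by parts
  have hparts := cpg_parts (fun t => θ t ^ p) (fun t => Real.exp (-p * A t))
    (fun u => p * θ u ^ (p - 1) * θ' u) (fun u => -p * Real.exp (-p * A u) * α u)
    a b hab hGψab hGEab hψrep hErep
  -- bound the integrand a.e.
  have hintLHS : IntervalIntegrable
      (fun u => θ u ^ p * (-p * Real.exp (-p * A u) * α u)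
        + Real.exp (-p * A u) * (p * θ u ^ (p - 1) * θ' u)) volume a b := by
    apply IntervalIntegrable.add
    · apply hGEab.continuousOn_mul
      rw [hIab]; exact hθpcont
    · apply hGψab.continuousOn_mul
      rw [hIab]; exact hEc
  have hintE : IntervalIntegrable (fun u => p * M₁ * Real.exp (-p * A u)) volume a b := by
    apply ContinuousOn.intervalIntegrable
    rw [hIab]
    exact continuousOn_const.mul hEc
  have hae : ∀ᵐ u ∂(volume.restrict (Icc a b)),
      θ u ^ p * (-p * Real.exp (-p * A u) * α u)
        + Real.exp (-p * A u) * (p * θ u ^ (p - 1) * θ' u)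
      ≤ p * M₁ * Real.exp (-p * A u) := by
    have h1 : ∀ᵐ u ∂(volume.restrict (Icc a b)),
        0 ≤ u → 0 < θ u → θ' u ≤ α u * θ u + M₁ * θ u ^ q := ae_restrict_of_ae hineq
    have h2 : ∀ᵐ u ∂(volume.restrict (Icc a b)), u ∈ Icc a b :=
      ae_restrict_mem measurableSet_Icc
    filter_upwards [h1, h2] with u hu humem
    have hθu : 1 ≤ θ u := hθ1 u humem
    have hθpos : (0:ℝ) < θ u := by linarith
    have h3 : θ' u ≤ α u * θ u + M₁ * θ u ^ q := hu (le_trans h0a humem.1) hθpos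
    have hc1 : θ u ^ (p - 1) * θ u = θ u ^ p := by
      rw [← Real.rpow_add_one hθpos.ne' (p - 1)]
      ring_nf
    have hc2 : θ u ^ (p - 1) * θ u ^ q = 1 := by
      rw [← Real.rpow_add hθpos]
      have : p - 1 + q = 0 := by rw [hpdef]; ring
      rw [this, Real.rpow_zero]
    have h4 : p * θ u ^ (p - 1) * θ' u ≤ p * α u * θ u ^ p + p * M₁ := by
      have hpos : (0:ℝ) ≤ p * θ u ^ (p - 1) := by positivity
      calc p * θ u ^ (p - 1) * θ' u
          ≤ p * θ u ^ (p - 1) * (α u * θ u + M₁ * θ u ^ q) := by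
            rw [mul_assoc, mul_assoc]
            exact mul_le_mul_of_nonneg_left (mul_le_mul_of_nonneg_left h3 (by positivity)) hp.le
        _ = p * α u * (θ u ^ (p - 1) * θ u) + p * M₁ * (θ u ^ (p - 1) * θ u ^ q) := by ring
        _ = p * α u * θ u ^ p + p * M₁ := by rw [hc1, hc2]; ring
    have hE : (0:ℝ) ≤ Real.exp (-p * A u) := (Real.exp_pos _).le
    have h5 : p * θ u ^ (p - 1) * θ' u - p * α u * θ u ^ p - p * M₁ ≤ 0 := by linarith
    have h6 := mul_le_mul_of_nonneg_left h5 hE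
    nlinarith [h6]
  have hmono := intervalIntegral.integral_mono_ae_restrict hab hintLHS hintE hae
  have hEa : Real.exp (-p * A a) = 1 := by rw [hAa]; simp
  have hconst : (∫ u in a..b, p * M₁ * Real.exp (-p * A u))
      = p * M₁ * ∫ u in a..b, Real.exp (-p * A u) := intervalIntegral.integral_const_mul _ _
  have key : θ b ^ p * Real.exp (-p * A b)
      ≤ θ a ^ p + p * M₁ * ∫ u in a..b, Real.exp (-p * A u) := by
    rw [hEa] at hparts
    rw [hconst] at hmono
    linarith
  -- multiply by exp (p * A b)
  have hAb : A b ≤ M₂ := hαbound a b h0a hab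
  have hexpAb : (0:ℝ) < Real.exp (p * A b) := Real.exp_pos _
  have hmul := mul_le_mul_of_nonneg_right key hexpAb.le
  have hlhs : θ b ^ p * Real.exp (-p * A b) * Real.exp (p * A b) = θ b ^ p := by
    rw [mul_assoc, ← Real.exp_add]
    norm_num
  rw [hlhs] at hmul
  have hintabE : IntervalIntegrable (fun u => Real.exp (p * A b) * Real.exp (-p * A u))
      volume a b := by
    apply ContinuousOn.intervalIntegrable
    rw [hIab]
    exact continuousOn_const.mul hEc
  have hstep2 : Real.exp (p * A b) * (∫ u in a..b, Real.exp (-p * A u))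
      ≤ Real.exp (p * M₂) * (b - a) := by
    rw [← intervalIntegral.integral_const_mul]
    have hconstint : IntervalIntegrable (fun _ : ℝ => Real.exp (p * M₂)) volume a b :=
      intervalIntegrable_const
    have hm := intervalIntegral.integral_mono_on hab hintabE hconstint ?_
    · rw [intervalIntegral.integral_const, smul_eq_mul] at hm
      linarith
    · intro u hu
      rw [← Real.exp_add]
      apply Real.exp_le_exp.mpr
      have hαu : (∫ s in u..b, α s) ≤ M₂ := hαbound u b (le_trans h0a hu.1) hu.2
      have hsplit : A u + ∫ s in u..b, α s = A b := by
        apply intervalIntegral.integral_add_adjacent_intervals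
          (hαab.mono_set (cpg_uIcc_sub le_rfl hu.1 hu.2))
          (hαab.mono_set (cpg_uIcc_sub hu.1 hu.2 le_rfl))
      nlinarith [hp]
  have hθap : (0:ℝ) ≤ θ a ^ p := Real.rpow_nonneg (by linarith [hθ1 a ⟨le_rfl, hab⟩]) p
  have hfinal : θ b ^ p ≤ Real.exp (p * M₂) * (θ a ^ p + p * M₁ * (b - a)) := by
    have he1 : Real.exp (p * A b) ≤ Real.exp (p * M₂) :=
      Real.exp_le_exp.mpr (by nlinarith [hp])
    calc θ b ^ p ≤ (θ a ^ p + p * M₁ * ∫ u in a..b, Real.exp (-p * A u))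
          * Real.exp (p * A b) := hmul
      _ = θ a ^ p * Real.exp (p * A b)
          + p * M₁ * (Real.exp (p * A b) * ∫ u in a..b, Real.exp (-p * A u)) := by ring
      _ ≤ θ a ^ p * Real.exp (p * M₂) + p * M₁ * (Real.exp (p * M₂) * (b - a)) := by
          apply add_le_add
          · exact mul_le_mul_of_nonneg_left he1 hθap
          · exact mul_le_mul_of_nonneg_left hstep2 (by positivity)
      _ = Real.exp (p * M₂) * (θ a ^ p + p * M₁ * (b - a)) := by ring
  calc θ b ^ (1 - q) = θ b ^ p := by rw [hpdef]
    _ ≤ Real.exp (p * M₂) * (θ a ^ p + p * M₁ * (b - a)) := hfinal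
    _ = Real.exp ((1 - q) * M₂) * (θ a ^ (1 - q) + (1 - q) * M₁ * (b - a)) := by rw [hpdef]

theorem comparison_polynomial_growth (θ θ' α : ℝ → ℝ) (M₁ M₂ q : ℝ)
    (hM₁ : 0 < M₁) (hM₂ : 0 < M₂) (hq : q < 1)
    (hθnonneg : ∀ t, 0 ≤ t → 0 ≤ θ t)
    (hθ'int : ∀ t, IntervalIntegrable θ' volume 0 t)
    (hθFTC : ∀ t, 0 ≤ t → θ t = θ 0 + ∫ s in (0:ℝ)..t, θ' s)
    (hαint : ∀ t, IntervalIntegrable α volume 0 t)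
    (hαbound : ∀ t₁ t₂, 0 ≤ t₁ → t₁ ≤ t₂ → (∫ s in t₁..t₂, α s) ≤ M₂)
    (hineq : ∀ᵐ t ∂volume, 0 ≤ t → 0 < θ t → θ' t ≤ α t * θ t + M₁ * θ t ^ q) :
    ∀ t, 0 ≤ t →
      θ t ≤ Real.exp M₂ * (1 + M₁ * (1 - q) * t) ^ (1 / (1 - q)) * (1 + θ 0) := by
  intro t₀ ht₀
  set p := 1 - q with hpdef
  have hp : 0 < p := by rw [hpdef]; linarith
  have hθ0 : 0 ≤ θ 0 := hθnonneg 0 le_rfl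
  have hbase : (1:ℝ) ≤ 1 + M₁ * (1 - q) * t₀ := by
    have : 0 ≤ M₁ * (1 - q) * t₀ := mul_nonneg (mul_nonneg hM₁.le (by linarith)) ht₀
    linarith
  have hpow1 : (1:ℝ) ≤ (1 + M₁ * (1 - q) * t₀) ^ (1 / (1 - q)) :=
    Real.one_le_rpow hbase (by positivity)
  have hexpM₂ : (1:ℝ) ≤ Real.exp M₂ := Real.one_le_exp hM₂.le
  have hRHS1 : (1:ℝ) ≤ Real.exp M₂ * (1 + M₁ * (1 - q) * t₀) ^ (1 / (1 - q)) * (1 + θ 0) := by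
    have h1 : Real.exp M₂ ≤ Real.exp M₂ * (1 + M₁ * (1 - q) * t₀) ^ (1 / (1 - q)) :=
      le_mul_of_one_le_right (Real.exp_pos _).le hpow1
    have h2 : Real.exp M₂ * (1 + M₁ * (1 - q) * t₀) ^ (1 / (1 - q))
        ≤ Real.exp M₂ * (1 + M₁ * (1 - q) * t₀) ^ (1 / (1 - q)) * (1 + θ 0) :=
      le_mul_of_one_le_right (by positivity) (by linarith)
    linarith
  by_cases hcase : θ t₀ ≤ 1
  · linarith
  push_neg at hcase
  have hθrep0 : ∀ t ∈ Icc 0 t₀, θ t = θ 0 + ∫ u in (0:ℝ)..t, θ' u := fun t ht => hθFTC t ht.1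
  have hθc : ContinuousOn θ (Icc 0 t₀) := cpg_contOn θ θ' 0 t₀ ht₀ (hθ'int t₀) hθrep0
  -- unified estimate: ψ t₀ ≤ exp (p M₂) ((1+θ0)^p (1 + p M₁ t₀))
  have honele : (1:ℝ) ≤ (1 + θ 0) ^ p := Real.one_le_rpow (by linarith) hp.le
  have hfac0 : (0:ℝ) ≤ 1 + p * M₁ * t₀ := by positivity
  have hψbound : θ t₀ ^ p ≤ Real.exp (p * M₂) * ((1 + θ 0) ^ p * (1 + p * M₁ * t₀)) := by
    set S := {t | t ∈ Icc 0 t₀ ∧ θ t ≤ 1} with hSdef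
    by_cases hS : S.Nonempty
    · -- t₁ = last time θ ≤ 1
      have hbdd : BddAbove S := BddAbove.mono (fun t ht => ht.1) bddAbove_Icc
      have hSclosed : IsClosed S := by
        have : S = Icc 0 t₀ ∩ θ ⁻¹' (Iic 1) := by
          ext t; simp [hSdef, Set.mem_inter_iff, and_comm]
        rw [this]
        exact hθc.preimage_isClosed_of_isClosed isClosed_Icc isClosed_Iic
      set t₁ := sSup S with ht₁def
      have ht₁S : t₁ ∈ S := hSclosed.csSup_mem hS hbdd
      have ht₁mem : t₁ ∈ Icc 0 t₀ := ht₁S.1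
      have hθt₁ : θ t₁ ≤ 1 := ht₁S.2
      have ht₁t₀ : t₁ < t₀ := lt_of_le_of_ne ht₁mem.2 (fun h => by rw [h] at hθt₁; linarith)
      have h1lt : ∀ t, t₁ < t → t ≤ t₀ → 1 ≤ θ t := by
        intro t h1 h2
        by_contra hle
        push_neg at hle
        have htS : t ∈ S := ⟨⟨le_trans ht₁mem.1 h1.le, h2⟩, hle.le⟩
        exact absurd (le_csSup hbdd htS) (not_le.mpr h1)
      -- estimate for each s ∈ Ioc t₁ t₀, then limit s → t₁⁺
      have hest : ∀ᶠ s in nhdsWithin t₁ (Set.Ioi t₁),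
          θ t₀ ^ p ≤ Real.exp (p * M₂) * (θ s ^ p + p * M₁ * (t₀ - s)) := by
        filter_upwards [Ioc_mem_nhdsGT_of_mem (⟨le_rfl, ht₁t₀⟩ : t₁ ∈ Ico t₁ t₀)] with s hs
        have h0s : 0 ≤ s := le_trans ht₁mem.1 hs.1.le
        have := cpg_core θ θ' α M₁ M₂ q hM₁ hq hθ'int hθFTC hαint hαbound hineq s t₀ h0s hs.2
          (fun u hu => h1lt u (lt_of_lt_of_le hs.1 hu.1) hu.2)
        rw [← hpdef] at this
        exact this
      have hIccmem : Icc 0 t₀ ∈ nhdsWithin t₁ (Set.Ioi t₁) := by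
        apply Filter.mem_of_superset (Ioc_mem_nhdsGT_of_mem (⟨le_rfl, ht₁t₀⟩ : t₁ ∈ Ico t₁ t₀))
        intro u hu
        exact ⟨le_trans ht₁mem.1 hu.1.le, hu.2⟩
      have hθtend : Filter.Tendsto θ (nhdsWithin t₁ (Set.Ioi t₁)) (nhds (θ t₁)) :=
        (hθc t₁ ht₁mem).mono_left (nhdsWithin_le_of_mem hIccmem)
      have hψtend : Filter.Tendsto (fun s => θ s ^ p) (nhdsWithin t₁ (Set.Ioi t₁))
          (nhds (θ t₁ ^ p)) :=
        ((Real.continuousAt_rpow_const (θ t₁) p (Or.inr hp.le)).tendsto).comp hθtend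
      have hidtend : Filter.Tendsto (fun s : ℝ => s) (nhdsWithin t₁ (Set.Ioi t₁)) (nhds t₁) :=
        Filter.tendsto_id.mono_left nhdsWithin_le_nhds
      have htend : Filter.Tendsto (fun s => Real.exp (p * M₂) * (θ s ^ p + p * M₁ * (t₀ - s)))
          (nhdsWithin t₁ (Set.Ioi t₁))
          (nhds (Real.exp (p * M₂) * (θ t₁ ^ p + p * M₁ * (t₀ - t₁)))) := by
        apply Filter.Tendsto.const_mul
        exact hψtend.add (((tendsto_const_nhds).sub hidtend).const_mul _)
      have hlim : θ t₀ ^ p ≤ Real.exp (p * M₂) * (θ t₁ ^ p + p * M₁ * (t₀ - t₁)) :=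
        ge_of_tendsto htend hest
      have hθt₁p : θ t₁ ^ p ≤ 1 := Real.rpow_le_one (hθnonneg t₁ ht₁mem.1) hθt₁ hp.le
      have h1 : θ t₁ ^ p + p * M₁ * (t₀ - t₁) ≤ (1 + θ 0) ^ p * (1 + p * M₁ * t₀) := by
        have h2 : p * M₁ * (t₀ - t₁) ≤ p * M₁ * t₀ := by
          nlinarith [mul_nonneg (mul_nonneg hp.le hM₁.le) ht₁mem.1]
        have h3 : 1 + p * M₁ * t₀ ≤ (1 + θ 0) ^ p * (1 + p * M₁ * t₀) :=
          le_mul_of_one_le_left hfac0 honele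
        linarith
      calc θ t₀ ^ p ≤ Real.exp (p * M₂) * (θ t₁ ^ p + p * M₁ * (t₀ - t₁)) := hlim
        _ ≤ Real.exp (p * M₂) * ((1 + θ 0) ^ p * (1 + p * M₁ * t₀)) :=
            mul_le_mul_of_nonneg_left h1 (Real.exp_pos _).le
    · -- θ > 1 everywhere on [0, t₀]
      have h1le : ∀ t ∈ Icc 0 t₀, 1 ≤ θ t := by
        intro t ht
        by_contra hle
        push_neg at hle
        exact hS ⟨t, ht, hle.le⟩
      have hcore := cpg_core θ θ' α M₁ M₂ q hM₁ hq hθ'int hθFTC hαint hαbound hineq 0 t₀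
        le_rfl ht₀ h1le
      rw [← hpdef] at hcore
      have hθ0p : θ 0 ^ p ≤ (1 + θ 0) ^ p := Real.rpow_le_rpow hθ0 (by linarith) hp.le
      have h1 : θ 0 ^ p + p * M₁ * (t₀ - 0) ≤ (1 + θ 0) ^ p * (1 + p * M₁ * t₀) := by
        have h2 : p * M₁ * t₀ ≤ (1 + θ 0) ^ p * (p * M₁ * t₀) :=
          le_mul_of_one_le_left (by positivity) honele
        nlinarith [hθ0p, h2]
      calc θ t₀ ^ p ≤ Real.exp (p * M₂) * (θ 0 ^ p + p * M₁ * (t₀ - 0)) := hcore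
        _ ≤ Real.exp (p * M₂) * ((1 + θ 0) ^ p * (1 + p * M₁ * t₀)) :=
            mul_le_mul_of_nonneg_left h1 (Real.exp_pos _).le
  -- take p-th root
  have hθt₀0 : 0 ≤ θ t₀ := hθnonneg t₀ ht₀
  have hroot : θ t₀ = (θ t₀ ^ p) ^ (1 / p) := by
    rw [← Real.rpow_mul hθt₀0, mul_one_div, div_self hp.ne', Real.rpow_one]
  have hmono : (θ t₀ ^ p) ^ (1 / p)
      ≤ (Real.exp (p * M₂) * ((1 + θ 0) ^ p * (1 + p * M₁ * t₀))) ^ (1 / p) :=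
    Real.rpow_le_rpow (Real.rpow_nonneg hθt₀0 p) hψbound (by positivity)
  have hsplit : (Real.exp (p * M₂) * ((1 + θ 0) ^ p * (1 + p * M₁ * t₀))) ^ (1 / p)
      = Real.exp M₂ * ((1 + θ 0) * (1 + p * M₁ * t₀) ^ (1 / p)) := by
    rw [Real.mul_rpow (Real.exp_pos _).le (by positivity),
      Real.mul_rpow (Real.rpow_nonneg (by linarith) p) hfac0]
    congr 1
    · rw [← Real.exp_mul]
      congr 1
      field_simp
    congr 1
    · rw [← Real.rpow_mul (by linarith), mul_one_div, div_self hp.ne', Real.rpow_one]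
  have hfin : θ t₀ ≤ Real.exp M₂ * ((1 + θ 0) * (1 + p * M₁ * t₀) ^ (1 / p)) := by
    rw [hroot]
    rw [hsplit] at hmono
    exact hmono
  have heq : 1 + M₁ * (1 - q) * t₀ = 1 + p * M₁ * t₀ := by rw [hpdef]; ring
  rw [heq, hpdef] at *
  calc θ t₀ ≤ Real.exp M₂ * ((1 + θ 0) * (1 + (1-q) * M₁ * t₀) ^ (1 / (1-q))) := by
        rw [show 1 + p * M₁ * t₀ = 1 + (1-q) * M₁ * t₀ from by rw [hpdef]] at hfin
        exact hfin
    _ = Real.exp M₂ * (1 + (1-q) * M₁ * t₀) ^ (1 / (1-q)) * (1 + θ 0) := by ring
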